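/- Fix ω ∈ ℝ and (normalizing g = h₀ = 1) let c(k) = (ω/2)·tanh(k)/k + √(tanh(k)/k + (ω²/4)·(tanh(k)/k)²) for k > 0, and let c₀ = ω/2 + √(1 + ω²/4) be its limit as k → 0⁺. Then for every k > 0: (d²/dk²)(k·c(k)) ≠ 0 and ((d/dk)(k·c(k)))² ≠ c₀². That is, the resonance indices i₁(k) = (k c(k))″ and i₂(k) = ((k c(k))′)² − c₀² of the full-dispersion shallow water equations never vanish: the group velocity has no extremum, and the resonance of short and long waves does not occur, for any constant vorticity ω. -/

import Mathlib

open Real Filter Topology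

namespace ResonanceAux

noncomputable def Gf (A k : ℝ) : ℝ := k * Real.tanh k + A * Real.tanh k ^ 2

noncomputable def dG (A k : ℝ) : ℝ :=
  Real.tanh k + k * (1 - Real.tanh k ^ 2) + 2 * A * (Real.tanh k * (1 - Real.tanh k ^ 2))

noncomputable def ddG (A k : ℝ) : ℝ :=
  2 * (1 - Real.tanh k ^ 2) - 2 * k * Real.tanh k * (1 - Real.tanh k ^ 2)
    + 2 * A * (1 - Real.tanh k ^ 2) ^ 2 - 4 * A * Real.tanh k ^ 2 * (1 - Real.tanh k ^ 2)

noncomputable def Ff (a k : ℝ) : ℝ := a * Real.tanh k + Real.sqrt (Gf (a ^ 2) k)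

noncomputable def φ (a k : ℝ) : ℝ :=
  a * (1 - Real.tanh k ^ 2) + dG (a ^ 2) k / (2 * Real.sqrt (Gf (a ^ 2) k))

noncomputable def φ₂ (a k : ℝ) : ℝ :=
  (2 * Gf (a ^ 2) k * ddG (a ^ 2) k - dG (a ^ 2) k ^ 2
    - 8 * a * Real.tanh k * (1 - Real.tanh k ^ 2) * Gf (a ^ 2) k * Real.sqrt (Gf (a ^ 2) k))
    / (4 * Gf (a ^ 2) k * Real.sqrt (Gf (a ^ 2) k))

noncomputable def ψ (a k : ℝ) : ℝ :=
  a * (1 - Real.tanh k ^ 2) +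
    (Real.tanh k / k + (1 - Real.tanh k ^ 2)
      + 2 * a ^ 2 * (Real.tanh k / k * (1 - Real.tanh k ^ 2)))
    / (2 * Real.sqrt (Real.tanh k / k + a ^ 2 * (Real.tanh k / k) ^ 2))

lemma tanh_hasDerivAt (x : ℝ) : HasDerivAt Real.tanh (1 - Real.tanh x ^ 2) x := by
  have hc : Real.cosh x ≠ 0 := (Real.cosh_pos x).ne'
  have h := (Real.hasDerivAt_sinh x).div (Real.hasDerivAt_cosh x) hc
  have he : ∀ y : ℝ, Real.tanh y = Real.sinh y / Real.cosh y := fun y =>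
    Real.tanh_eq_sinh_div_cosh y
  have h2 : (Real.cosh x * Real.cosh x - Real.sinh x * Real.sinh x) / Real.cosh x ^ 2
      = 1 - Real.tanh x ^ 2 := by
    rw [he]
    have := Real.cosh_sq_sub_sinh_sq x
    field_simp
  rw [h2] at h
  exact h.congr_of_eventuallyEq (by filter_upwards with y using (he y))

lemma s_pos (x : ℝ) : 0 < 1 - Real.tanh x ^ 2 := by
  have hc : 0 < Real.cosh x := Real.cosh_pos x
  have := Real.cosh_sq_sub_sinh_sq x
  rw [Real.tanh_eq_sinh_div_cosh]
  have h2 : (Real.sinh x / Real.cosh x) ^ 2 = Real.sinh x ^ 2 / Real.cosh x ^ 2 := by ring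
  rw [h2, sub_pos, div_lt_one (by positivity)]
  nlinarith

lemma tanh_pos {x : ℝ} (hx : 0 < x) : 0 < Real.tanh x := by
  rw [Real.tanh_eq_sinh_div_cosh]
  exact div_pos (by simpa using Real.sinh_pos_iff.2 hx) (Real.cosh_pos x)

lemma Gf_pos {A k : ℝ} (hA : 0 ≤ A) (hk : 0 < k) : 0 < Gf A k := by
  rw [Gf]
  have := tanh_pos hk
  have : 0 < k * Real.tanh k := by positivity
  nlinarith [sq_nonneg (Real.tanh k), mul_nonneg hA (sq_nonneg (Real.tanh k))]

lemma Gf_hasDerivAt (A k : ℝ) : HasDerivAt (fun x => Gf A x) (dG A k) k := by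
  have ht := tanh_hasDerivAt k
  have h1 : HasDerivAt (fun x => x * Real.tanh x)
      (1 * Real.tanh k + k * (1 - Real.tanh k ^ 2)) k := (hasDerivAt_id k).mul ht
  have h2 : HasDerivAt (fun x => A * Real.tanh x ^ 2)
      (A * (2 * Real.tanh k ^ 1 * (1 - Real.tanh k ^ 2))) k := (ht.pow 2).const_mul A
  have := h1.add h2
  refine this.congr_deriv ?_
  simp [dG]; ring

lemma sqrtG_hasDerivAt {A k : ℝ} (hA : 0 ≤ A) (hk : 0 < k) :
    HasDerivAt (fun x => Real.sqrt (Gf A x)) (dG A k / (2 * Real.sqrt (Gf A k))) k := by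
  have h := (Real.hasDerivAt_sqrt (Gf_pos hA hk).ne').comp k (Gf_hasDerivAt A k)
  refine h.congr_deriv ?_
  field_simp

lemma Ff_hasDerivAt (a : ℝ) {k : ℝ} (hk : 0 < k) : HasDerivAt (Ff a) (φ a k) k :=
  ((tanh_hasDerivAt k).const_mul a).add (sqrtG_hasDerivAt (sq_nonneg a) hk)

lemma dG_hasDerivAt (A k : ℝ) : HasDerivAt (fun x => dG A x) (ddG A k) k := by
  have ht := tanh_hasDerivAt k
  have hs : HasDerivAt (fun x => 1 - Real.tanh x ^ 2)
      (-(2 * Real.tanh k ^ 1 * (1 - Real.tanh k ^ 2))) k := (ht.pow 2).const_sub 1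
  have h1 : HasDerivAt (fun x => x * (1 - Real.tanh x ^ 2))
      (1 * (1 - Real.tanh k ^ 2) + k * -(2 * Real.tanh k ^ 1 * (1 - Real.tanh k ^ 2))) k :=
    (hasDerivAt_id k).mul hs
  have h2 : HasDerivAt (fun x => Real.tanh x * (1 - Real.tanh x ^ 2))
      ((1 - Real.tanh k ^ 2) * (1 - Real.tanh k ^ 2)
        + Real.tanh k * -(2 * Real.tanh k ^ 1 * (1 - Real.tanh k ^ 2))) k := ht.mul hs
  have := (ht.add h1).add (h2.const_mul (2 * A))
  refine this.congr_deriv ?_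
  simp [ddG]; ring

lemma φ_hasDerivAt (a : ℝ) {k : ℝ} (hk : 0 < k) : HasDerivAt (φ a) (φ₂ a k) k := by
  have hA : (0:ℝ) ≤ a ^ 2 := sq_nonneg a
  have hg := Gf_pos hA hk
  have hh : 0 < Real.sqrt (Gf (a ^ 2) k) := Real.sqrt_pos.2 hg
  have hsq : Real.sqrt (Gf (a ^ 2) k) ^ 2 = Gf (a ^ 2) k := Real.sq_sqrt hg.le
  have ht := tanh_hasDerivAt k
  have hpart1 : HasDerivAt (fun x => a * (1 - Real.tanh x ^ 2))
      (a * -(2 * Real.tanh k ^ 1 * (1 - Real.tanh k ^ 2))) k :=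
    ((ht.pow 2).const_sub 1).const_mul a
  have hden : HasDerivAt (fun x => 2 * Real.sqrt (Gf (a ^ 2) x))
      (2 * (dG (a ^ 2) k / (2 * Real.sqrt (Gf (a ^ 2) k)))) k :=
    (sqrtG_hasDerivAt hA hk).const_mul 2
  have hquot := (dG_hasDerivAt (a ^ 2) k).div hden (by positivity)
  have h := hpart1.add hquot
  refine h.congr_deriv ?_
  rw [φ₂]
  field_simp
  ring_nf
  rw [show Real.sqrt (Gf (a^2) k) ^ 3 = Real.sqrt (Gf (a^2) k) ^ 2 * Real.sqrt (Gf (a^2) k) by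
    ring, hsq]
  ring

lemma phi2_neg (a : ℝ) {k : ℝ} (hk : 0 < k) : φ₂ a k < 0 := by
  have ht0 : 0 < Real.tanh k := tanh_pos hk
  have hs0 : 0 < 1 - Real.tanh k ^ 2 := s_pos k
  have hg : 0 < Gf (a ^ 2) k := Gf_pos (sq_nonneg a) hk
  have hh : 0 < Real.sqrt (Gf (a ^ 2) k) := Real.sqrt_pos.2 hg
  set t := Real.tanh k with htdef
  set s := 1 - t ^ 2 with hsdef
  set g := Gf (a ^ 2) k with hgdef
  set h := Real.sqrt g with hhdef
  have hsq : h ^ 2 = g := Real.sq_sqrt hg.le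
  have hgval : g = k * t + a ^ 2 * t ^ 2 := by rw [hgdef, Gf]
  have hD : dG (a ^ 2) k = t + k * s + 2 * a ^ 2 * (t * s) := by rw [dG]
  have hDD : ddG (a ^ 2) k = 2 * s - 2 * k * t * s + 2 * a ^ 2 * s ^ 2
      - 4 * a ^ 2 * t ^ 2 * s := by rw [ddG]
  have hnum : 2 * g * ddG (a ^ 2) k - dG (a ^ 2) k ^ 2 - 8 * a * t * s * g * h < 0 := by
    rcases le_or_gt 0 a with ha | ha
    · have hat : a * t ≤ h := by
        nlinarith [hsq, hgval, mul_pos hk ht0, Real.sqrt_nonneg g,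
          mul_nonneg ha ht0.le]
      have key : 2 * g * ddG (a ^ 2) k - dG (a ^ 2) k ^ 2 - 8 * (a * t) * (a * t) * s * g
          = -(t - k * s) ^ 2 - 4 * k ^ 2 * t ^ 2 * s - 20 * a ^ 2 * k * t ^ 3 * s
            - 16 * (a ^ 2) ^ 2 * t ^ 4 * s := by
        rw [hD, hDD, hgval]; ring
      have h8 : 0 ≤ 8 * a * t * s * g := by positivity
      nlinarith [sq_nonneg (t - k * s), mul_pos (mul_pos (mul_pos hk hk) (mul_pos ht0 ht0)) hs0,
        mul_nonneg (mul_nonneg (mul_nonneg (mul_nonneg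
          (by positivity : (0:ℝ) ≤ 20 * a ^ 2) hk.le) ht0.le)
          (by positivity : (0:ℝ) ≤ t ^ 2)) hs0.le,
        mul_nonneg (mul_nonneg (by positivity : (0:ℝ) ≤ 16 * (a ^ 2) ^ 2)
          (by positivity : (0:ℝ) ≤ t ^ 4)) hs0.le,
        mul_le_mul_of_nonneg_left hat h8]
    · set b := -a with hbdef
      have hb : 0 < b := by simp [hbdef]; linarith
      have hab : a = -b := by rw [hbdef]; ring
      obtain ⟨R, hRdef⟩ : ∃ R : ℝ, R = b * t + k / (2 * b) := ⟨_, rfl⟩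
      have hR : 0 < R := by rw [hRdef]; positivity
      have hgR : g < R ^ 2 := by
        have e : R ^ 2 = b ^ 2 * t ^ 2 + k * t + k ^ 2 / (4 * b ^ 2) := by
          rw [hRdef]; field_simp; ring
        have e2 : a ^ 2 = b ^ 2 := by rw [hab]; ring
        have : 0 < k ^ 2 / (4 * b ^ 2) := by positivity
        rw [e, hgval, e2]; linarith
      have hub : h < R := by
        rw [hhdef]; exact (Real.sqrt_lt' hR).2 hgR
      have key : 2 * g * ddG (a ^ 2) k - dG (a ^ 2) k ^ 2
          + 8 * b * t * s * g * R = -(t - k * s) ^ 2 := by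
        have e2 : a ^ 2 = b ^ 2 := by rw [hab]; ring
        rw [hRdef, hD, hDD, hgval, e2]
        field_simp
        ring
      have h8 : 0 < 8 * b * t * s * g := by positivity
      have hlt : 8 * b * t * s * g * h < 8 * b * t * s * g * R :=
        (mul_lt_mul_iff_right₀ h8).2 hub
      have hae : -(8 * a * t * s * g * h) = 8 * b * t * s * g * h := by rw [hab]; ring
      have hsqn : (0:ℝ) ≤ (t - k * s) ^ 2 := sq_nonneg _
      linarith
  have hden : 0 < 4 * g * h := by positivity
  rw [φ₂]
  exact div_neg_of_neg_of_pos hnum hden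

lemma phi_pos (a : ℝ) {k : ℝ} (hk : 0 < k) : 0 < φ a k := by
  have ht0 : 0 < Real.tanh k := tanh_pos hk
  have hs0 : 0 < 1 - Real.tanh k ^ 2 := s_pos k
  have hg : 0 < Gf (a ^ 2) k := Gf_pos (sq_nonneg a) hk
  have hh : 0 < Real.sqrt (Gf (a ^ 2) k) := Real.sqrt_pos.2 hg
  set t := Real.tanh k with htdef
  set s := 1 - t ^ 2 with hsdef
  set g := Gf (a ^ 2) k with hgdef
  set h := Real.sqrt g with hhdef
  have hsq : h ^ 2 = g := Real.sq_sqrt hg.le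
  have hgval : g = k * t + a ^ 2 * t ^ 2 := by rw [hgdef, Gf]
  have hD : dG (a ^ 2) k = t + k * s + 2 * a ^ 2 * (t * s) := by rw [dG]
  have hDpos : 0 < dG (a ^ 2) k := by rw [hD]; positivity
  have heq : φ a k = (2 * a * s * h + dG (a ^ 2) k) / (2 * h) := by
    rw [φ, ← htdef, ← hgdef, ← hhdef, hsdef]; field_simp
  rw [heq]
  apply div_pos _ (by positivity)
  rcases le_or_gt 0 a with ha | ha
  · have : 0 ≤ 2 * a * s * h := by positivity
    linarith
  · set b := -a with hbdef
    have hb : 0 < b := by simp [hbdef]; linarith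
    have hab : a = -b := by rw [hbdef]; ring
    have e2 : a ^ 2 = b ^ 2 := by rw [hab]; ring
    have hid : dG (a ^ 2) k ^ 2 - (2 * b * s * h) ^ 2
        = (t + k * s) ^ 2 + 4 * b ^ 2 * t ^ 2 * s := by
      rw [hD, e2]
      have : h ^ 2 = k * t + b ^ 2 * t ^ 2 := by rw [hsq, hgval, e2]
      nlinarith [this]
    have hbsh : 0 ≤ 2 * b * s * h := by positivity
    have hlt : 2 * b * s * h < dG (a ^ 2) k := by
      nlinarith [sq_nonneg (t + k * s),
        mul_pos (mul_pos (by positivity : (0:ℝ) < 4 * b ^ 2)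
          (by positivity : (0:ℝ) < t ^ 2)) hs0]
    have hae : 2 * a * s * h = -(2 * b * s * h) := by rw [hab]; ring
    linarith

lemma continuous_tanh : Continuous Real.tanh := by
  have : Real.tanh = fun x => Real.sinh x / Real.cosh x :=
    funext fun x => Real.tanh_eq_sinh_div_cosh x
  rw [this]
  exact Real.continuous_sinh.div Real.continuous_cosh fun x => (Real.cosh_pos x).ne'

lemma tendsto_tanh0 : Tendsto Real.tanh (𝓝[>] (0:ℝ)) (𝓝 0) := by
  have := continuous_tanh.tendsto 0
  rw [Real.tanh_zero] at this
  exact this.mono_left nhdsWithin_le_nhds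

lemma tendsto_m : Tendsto (fun x => Real.tanh x / x) (𝓝[>] (0:ℝ)) (𝓝 1) := by
  have h := tanh_hasDerivAt 0
  rw [hasDerivAt_iff_tendsto_slope] at h
  have h2 : Tendsto (slope Real.tanh 0) (𝓝[>] (0:ℝ)) (𝓝 (1 - Real.tanh 0 ^ 2)) :=
    h.mono_left (nhdsWithin_mono 0 (fun x hx => ne_of_gt hx))
  rw [Real.tanh_zero] at h2
  norm_num at h2
  refine h2.congr fun x => ?_
  rw [slope_def_field, Real.tanh_zero]
  simp

lemma sqrt_Gf_eq {a k : ℝ} (hk : 0 < k) :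
    Real.sqrt (Gf (a ^ 2) k)
      = k * Real.sqrt (Real.tanh k / k + a ^ 2 * (Real.tanh k / k) ^ 2) := by
  have e : Gf (a ^ 2) k = k ^ 2 * (Real.tanh k / k + a ^ 2 * (Real.tanh k / k) ^ 2) := by
    rw [Gf]; field_simp
  rw [e, Real.sqrt_mul (sq_nonneg k), Real.sqrt_sq hk.le]

lemma phi_eq_psi (a : ℝ) {k : ℝ} (hk : 0 < k) : φ a k = ψ a k := by
  have ht0 : 0 < Real.tanh k := tanh_pos hk
  have hu : 0 < Real.tanh k / k + a ^ 2 * (Real.tanh k / k) ^ 2 := by positivity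
  have hsu : 0 < Real.sqrt (Real.tanh k / k + a ^ 2 * (Real.tanh k / k) ^ 2) :=
    Real.sqrt_pos.2 hu
  rw [φ, ψ, sqrt_Gf_eq hk, dG]
  congr 1
  rw [div_eq_div_iff (by positivity) (by positivity)]
  field_simp

lemma tendsto_phi (a : ℝ) :
    Tendsto (φ a) (𝓝[>] (0:ℝ)) (𝓝 (a + Real.sqrt (1 + a ^ 2))) := by
  have hm := tendsto_m
  have ht := tendsto_tanh0
  have hs : Tendsto (fun k => 1 - Real.tanh k ^ 2) (𝓝[>] (0:ℝ)) (𝓝 (1 - 0 ^ 2)) :=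
    tendsto_const_nhds.sub (ht.pow 2)
  have hu : Tendsto (fun k => Real.tanh k / k + a ^ 2 * (Real.tanh k / k) ^ 2)
      (𝓝[>] (0:ℝ)) (𝓝 (1 + a ^ 2 * 1 ^ 2)) := hm.add ((hm.pow 2).const_mul (a ^ 2))
  have hsq : Tendsto (fun k => Real.sqrt (Real.tanh k / k + a ^ 2 * (Real.tanh k / k) ^ 2))
      (𝓝[>] (0:ℝ)) (𝓝 (Real.sqrt (1 + a ^ 2 * 1 ^ 2))) := hu.sqrt
  have hnum : Tendsto (fun k => Real.tanh k / k + (1 - Real.tanh k ^ 2)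
      + 2 * a ^ 2 * (Real.tanh k / k * (1 - Real.tanh k ^ 2)))
      (𝓝[>] (0:ℝ)) (𝓝 (1 + (1 - 0 ^ 2) + 2 * a ^ 2 * (1 * (1 - 0 ^ 2)))) :=
    (hm.add hs).add ((hm.mul hs).const_mul (2 * a ^ 2))
  have hone : (0:ℝ) < 1 + a ^ 2 := by positivity
  have heq1 : (1:ℝ) + a ^ 2 * 1 ^ 2 = 1 + a ^ 2 := by ring
  have hden : Tendsto (fun k => 2 * Real.sqrt (Real.tanh k / k + a ^ 2 * (Real.tanh k / k) ^ 2))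
      (𝓝[>] (0:ℝ)) (𝓝 (2 * Real.sqrt (1 + a ^ 2))) := by
    rw [← heq1]; exact hsq.const_mul 2
  have hdne : (2 : ℝ) * Real.sqrt (1 + a ^ 2) ≠ 0 := by positivity
  have hψ : Tendsto (ψ a) (𝓝[>] (0:ℝ))
      (𝓝 (a * (1 - 0 ^ 2) + (1 + (1 - 0 ^ 2) + 2 * a ^ 2 * (1 * (1 - 0 ^ 2)))
        / (2 * Real.sqrt (1 + a ^ 2)))) :=
    (hs.const_mul a).add (hnum.div hden hdne)
  have hval : a * (1 - 0 ^ 2) + (1 + (1 - 0 ^ 2) + 2 * a ^ 2 * (1 * (1 - 0 ^ 2)))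
      / (2 * Real.sqrt (1 + a ^ 2)) = a + Real.sqrt (1 + a ^ 2) := by
    have e1 : (1:ℝ) + (1 - 0 ^ 2) + 2 * a ^ 2 * (1 * (1 - 0 ^ 2)) = 2 * (1 + a ^ 2) := by ring
    rw [e1, mul_div_mul_left _ _ (two_ne_zero), Real.div_sqrt]
    ring
  rw [hval] at hψ
  refine hψ.congr' ?_
  filter_upwards [self_mem_nhdsWithin] with x hx
  exact (phi_eq_psi a hx).symm

end ResonanceAux

/-- With `g = h₀ = 1`, the resonance indices `i₁(k) = (k c(k))″` and
`i₂(k) = ((k c(k))′)² - c₀²` of the full-dispersion shallow water equations never vanish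
for `k > 0`: the group velocity has no extremum, and the resonance of short and long
waves does not occur, for any constant vorticity `ω`. Here `c₀ = ω/2 + √(1 + ω²/4)` is
the limit of the phase speed `c(k)` as `k → 0⁺`. -/
theorem resonances_R1_R2_never_occur
    (ω : ℝ)
    (c : ℝ → ℝ)
    (hc : ∀ k : ℝ, c k = ω / 2 * (Real.tanh k / k)
      + Real.sqrt (Real.tanh k / k + ω ^ 2 / 4 * (Real.tanh k / k) ^ 2))
    (c₀ : ℝ) (hc₀ : c₀ = ω / 2 + Real.sqrt (1 + ω ^ 2 / 4)) :
    Tendsto c (𝓝[>] 0) (𝓝 c₀) ∧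
    ∀ k > (0 : ℝ),
      deriv (deriv fun k' => k' * c k') k ≠ 0 ∧
      (deriv (fun k' => k' * c k') k) ^ 2 ≠ c₀ ^ 2 := by
  have hA : ω ^ 2 / 4 = (ω / 2) ^ 2 := by ring
  have h14 : (1 : ℝ) + ω ^ 2 / 4 = 1 + (ω / 2) ^ 2 := by ring
  have hc0' : c₀ = ω / 2 + Real.sqrt (1 + (ω / 2) ^ 2) := by rw [hc₀, h14]
  constructor
  · have hm := ResonanceAux.tendsto_m
    have hu : Tendsto (fun k => Real.tanh k / k + ω ^ 2 / 4 * (Real.tanh k / k) ^ 2)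
        (𝓝[>] (0:ℝ)) (𝓝 (1 + ω ^ 2 / 4 * 1 ^ 2)) := hm.add ((hm.pow 2).const_mul _)
    have h := (hm.const_mul (ω / 2)).add hu.sqrt
    have hval : ω / 2 * 1 + Real.sqrt (1 + ω ^ 2 / 4 * 1 ^ 2) = c₀ := by
      rw [hc₀]; norm_num
    rw [hval] at h
    exact h.congr fun k => (hc k).symm
  · intro k hk
    have hfF : ∀ x ∈ Set.Ioi (0:ℝ), x * c x = ResonanceAux.Ff (ω / 2) x := by
      intro x hx
      have hx0 : (0:ℝ) < x := hx
      rw [hc x, ResonanceAux.Ff, hA, ResonanceAux.sqrt_Gf_eq hx0]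
      field_simp
    have hEv : ∀ x ∈ Set.Ioi (0:ℝ),
        deriv (fun k' => k' * c k') x = ResonanceAux.φ (ω / 2) x := by
      intro x hx
      have hev : (fun k' => k' * c k') =ᶠ[𝓝 x] ResonanceAux.Ff (ω / 2) :=
        eventually_of_mem (Ioi_mem_nhds hx) hfF
      rw [hev.deriv_eq, (ResonanceAux.Ff_hasDerivAt (ω / 2) hx).deriv]
    have hd1 : deriv (fun k' => k' * c k') k = ResonanceAux.φ (ω / 2) k := hEv k hk
    have hd2 : deriv (deriv fun k' => k' * c k') k = ResonanceAux.φ₂ (ω / 2) k := by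
      have hev : deriv (fun k' => k' * c k') =ᶠ[𝓝 k] ResonanceAux.φ (ω / 2) :=
        eventually_of_mem (Ioi_mem_nhds hk) hEv
      rw [hev.deriv_eq, (ResonanceAux.φ_hasDerivAt (ω / 2) hk).deriv]
    refine ⟨by rw [hd2]; exact (ResonanceAux.phi2_neg (ω / 2) hk).ne, ?_⟩
    rw [hd1]
    have h1 : 0 < ResonanceAux.φ (ω / 2) k := ResonanceAux.phi_pos (ω / 2) hk
    have hanti : StrictAntiOn (ResonanceAux.φ (ω / 2)) (Set.Ioi 0) := by
      refine strictAntiOn_of_deriv_neg (convex_Ioi 0)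
        (fun x hx => ((ResonanceAux.φ_hasDerivAt (ω / 2) hx).differentiableAt.continuousAt).continuousWithinAt) ?_
      rw [interior_Ioi]
      intro x hx
      rw [(ResonanceAux.φ_hasDerivAt (ω / 2) hx).deriv]
      exact ResonanceAux.phi2_neg (ω / 2) hx
    have hhalf : (0:ℝ) < k / 2 := by linarith
    have hlt1 : ResonanceAux.φ (ω / 2) k < ResonanceAux.φ (ω / 2) (k / 2) :=
      hanti hhalf hk (by linarith)
    have hle : ResonanceAux.φ (ω / 2) (k / 2) ≤ ω / 2 + Real.sqrt (1 + (ω / 2) ^ 2) := by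
      refine ge_of_tendsto (ResonanceAux.tendsto_phi (ω / 2)) ?_
      filter_upwards [Ioo_mem_nhdsGT_of_mem (Set.left_mem_Ico.2 hhalf)] with x hx
      exact (hanti (Set.mem_Ioi.2 hx.1) hhalf hx.2).le
    have hc0pos : 0 < c₀ := by
      rw [hc0']
      have habs : |ω / 2| < Real.sqrt (1 + (ω / 2) ^ 2) := by
        rw [← Real.sqrt_sq_eq_abs]
        exact Real.sqrt_lt_sqrt (sq_nonneg _) (by linarith)
      have := neg_abs_le (ω / 2)
      linarith
    have h2 : ResonanceAux.φ (ω / 2) k < c₀ := by rw [hc0']; linarith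
    intro heq
    nlinarith [heq, h1, h2, hc0pos]
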